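/- Let $\chi\ge 1$, $\delta>0$, and let $Y_0$ be an $\mathbb{N}^+$-valued random variable with $\P(Y_0=k)=c_{\delta}e^{-\delta k}$, $k\ge 1$, where $c_{\delta}$ is the normalizing constant. Define $\alpha(k)=e^{-1/k^{\chi}}$. Then for every $0<\theta<\frac{1}{2\chi}$ we have $\lim_{n\to\infty}\mathbb{E}[\alpha(Y_0)^n]^{1/n^{\theta}}=0$. -/

import Mathlib

open MeasureTheory Filter
open scoped ENNReal

/-- Remark 2.7 of the paper: for a geometrically distributed environment value `Y₀`
on `ℕ⁺` and `α(k) = e^{-1/k^χ}`, the smallness condition holds for any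
`0 < θ < 1/(2χ)`. -/
theorem smallness_example_geometric
    {Ω : Type*} [MeasurableSpace Ω] (ℙ : Measure Ω) [IsProbabilityMeasure ℙ]
    (Y₀ : Ω → ℕ) (hYmeas : Measurable Y₀) (hYpos : ∀ ω, 1 ≤ Y₀ ω)
    (χ : ℝ) (hχ : 1 ≤ χ) (δ : ℝ) (hδ : 0 < δ) (c : ℝ) (hc : 0 < c)
    (hlaw : ∀ k : ℕ, 1 ≤ k →
      ℙ {ω | Y₀ ω = k} = ENNReal.ofReal (c * Real.exp (-δ * k)))
    (θ : ℝ) (hθ0 : 0 < θ) (hθ1 : θ < 1 / (2 * χ)) :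
    Filter.Tendsto
      (fun n : ℕ =>
        (∫ ω, (Real.exp (-1 / (Y₀ ω : ℝ) ^ χ)) ^ n ∂ℙ) ^ ((1 : ℝ) / (n : ℝ) ^ θ))
      Filter.atTop (nhds 0) := by
  have hχ0 : (0:ℝ) < χ := lt_of_lt_of_le one_pos hχ
  set b : ℝ := 1 / (2*χ) with hbdef
  have hb0 : (0:ℝ) < b := by positivity
  have hbhalf : b ≤ 1/2 := by
    rw [hbdef]
    apply one_div_le_one_div_of_le two_pos
    linarith
  set r : ℝ := Real.exp (-δ) with hrdef
  have hr0 : 0 < r := Real.exp_pos _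
  have hr1 : r < 1 := by
    rw [hrdef, Real.exp_lt_one_iff]; linarith
  set C : ℝ := c / (1 - r) with hCdef
  have hC0 : 0 < C := div_pos hc (by linarith)
  set ε : ℝ := min ((2:ℝ) ^ (-χ)) δ with hεdef
  have hε0 : 0 < ε := lt_min (Real.rpow_pos_of_pos two_pos _) hδ
  have hy1 : ∀ ω, (1:ℝ) ≤ (Y₀ ω : ℝ) := fun ω => by exact_mod_cast hYpos ω
  -- Key integral bound
  have key : ∀ n : ℕ, 1 ≤ n → (∫ ω, (Real.exp (-1 / (Y₀ ω : ℝ) ^ χ)) ^ n ∂ℙ)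
      ≤ (1 + C) * Real.exp (-(ε * (n:ℝ) ^ b)) := by
    intro n hn
    have hn1 : (1:ℝ) ≤ (n:ℝ) := by exact_mod_cast hn
    set x : ℝ := (n:ℝ) ^ b with hxdef
    have hx1 : (1:ℝ) ≤ x := Real.one_le_rpow hn1 hb0.le
    set m : ℕ := ⌊x⌋₊ + 1 with hmdef
    have hxm : x ≤ (m:ℝ) := by
      push_cast [hmdef]
      exact (Nat.lt_floor_add_one x).le
    have hm2x : (m:ℝ) ≤ 2 * x := by
      push_cast [hmdef]
      have := Nat.floor_le (by linarith : (0:ℝ) ≤ x)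
      linarith
    have hm1 : (1:ℝ) ≤ (m:ℝ) := le_trans hx1 hxm
    have hmge1 : 1 ≤ m := by exact_mod_cast hm1
    clear hmdef
    clear_value m
    set S : Set Ω := Y₀ ⁻¹' Set.Ioi m with hSdef
    have hSmeas : MeasurableSet S := hYmeas measurableSet_Ioi
    -- pointwise bound
    have hpt : ∀ ω, (Real.exp (-1 / (Y₀ ω : ℝ) ^ χ)) ^ n
        ≤ Real.exp (-((n:ℝ) / (m:ℝ) ^ χ)) + S.indicator (fun _ => (1:ℝ)) ω := by
      intro ω
      have hy0 : (0:ℝ) < (Y₀ ω : ℝ) := lt_of_lt_of_le one_pos (hy1 ω)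
      have hyχ : (0:ℝ) < (Y₀ ω : ℝ) ^ χ := Real.rpow_pos_of_pos hy0 χ
      by_cases h : Y₀ ω ≤ m
      · have hind : S.indicator (fun _ => (1:ℝ)) ω = 0 := by
          apply Set.indicator_of_notMem
          simp [hSdef, Set.mem_preimage]
          omega
        rw [hind, add_zero, ← Real.exp_nat_mul]
        apply Real.exp_le_exp.2
        have hym : (Y₀ ω : ℝ) ≤ (m:ℝ) := by exact_mod_cast h
        have h1 : (n:ℝ) / (m:ℝ) ^ χ ≤ (n:ℝ) / (Y₀ ω : ℝ) ^ χ := by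
          gcongr
        have h2 : (n:ℝ) * (-1 / (Y₀ ω : ℝ) ^ χ) = -((n:ℝ) / (Y₀ ω : ℝ) ^ χ) := by
          ring
        rw [h2]
        linarith
      · have hind : S.indicator (fun _ => (1:ℝ)) ω = 1 := by
          apply Set.indicator_of_mem
          simp [hSdef, Set.mem_preimage]
          omega
        rw [hind]
        have h1 : (Real.exp (-1 / (Y₀ ω : ℝ) ^ χ)) ^ n ≤ 1 := by
          apply pow_le_one₀ (Real.exp_nonneg _)
          rw [Real.exp_le_one_iff, neg_div]
          have : (0:ℝ) ≤ 1 / (Y₀ ω : ℝ) ^ χ := by positivity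
          linarith
        have := Real.exp_nonneg (-((n:ℝ) / (m:ℝ) ^ χ))
        linarith
    -- integrability
    have hmeasg : Measurable (fun ω => (Real.exp (-1 / (Y₀ ω : ℝ) ^ χ)) ^ n) :=
      (measurable_from_nat (f := fun k : ℕ => (Real.exp (-1 / (k : ℝ) ^ χ)) ^ n)).comp hYmeas
    have hintg : Integrable (fun ω => (Real.exp (-1 / (Y₀ ω : ℝ) ^ χ)) ^ n) ℙ := by
      apply Integrable.mono' (integrable_const (1:ℝ)) hmeasg.aestronglyMeasurable
      filter_upwards with ω
      rw [Real.norm_eq_abs, abs_of_nonneg (by positivity)]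
      apply pow_le_one₀ (Real.exp_nonneg _)
      rw [Real.exp_le_one_iff, neg_div]
      have hy0 : (0:ℝ) < (Y₀ ω : ℝ) := lt_of_lt_of_le one_pos (hy1 ω)
      have : (0:ℝ) ≤ 1 / (Y₀ ω : ℝ) ^ χ := by positivity
      linarith
    have hintI : Integrable (S.indicator (fun _ => (1:ℝ))) ℙ :=
      (integrable_const (1:ℝ)).indicator hSmeas
    have hintRHS : Integrable (fun ω => Real.exp (-((n:ℝ) / (m:ℝ) ^ χ))
        + S.indicator (fun _ => (1:ℝ)) ω) ℙ := (integrable_const _).add hintI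
    -- integral bound
    have hint : (∫ ω, (Real.exp (-1 / (Y₀ ω : ℝ) ^ χ)) ^ n ∂ℙ)
        ≤ Real.exp (-((n:ℝ) / (m:ℝ) ^ χ)) + (ℙ S).toReal := by
      calc (∫ ω, (Real.exp (-1 / (Y₀ ω : ℝ) ^ χ)) ^ n ∂ℙ)
          ≤ ∫ ω, (Real.exp (-((n:ℝ) / (m:ℝ) ^ χ)) + S.indicator (fun _ => (1:ℝ)) ω) ∂ℙ :=
            integral_mono hintg hintRHS hpt
        _ = Real.exp (-((n:ℝ) / (m:ℝ) ^ χ)) + (ℙ S).toReal := by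
            rw [integral_add (integrable_const _) hintI, integral_const,
              integral_indicator_const _ hSmeas]
            simp
            rfl
    -- first term bound
    have hbχ : b * χ = 1/2 := by
      rw [hbdef]; field_simp
    have hxχ : x ^ χ = (n:ℝ) ^ (1/2 : ℝ) := by
      rw [hxdef, ← Real.rpow_mul (by positivity), hbχ]
    have h2a : (2:ℝ) ^ (-χ) * (2:ℝ) ^ χ = 1 := by
      rw [← Real.rpow_add two_pos]; norm_num
    have hnhalf : (n:ℝ) ^ (1/2:ℝ) * (n:ℝ) ^ (1/2:ℝ) = (n:ℝ) := by
      rw [← Real.rpow_add (by positivity)]; norm_num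
    have hmχ : (m:ℝ) ^ χ ≤ (2:ℝ) ^ χ * (n:ℝ) ^ (1/2:ℝ) := by
      calc (m:ℝ) ^ χ ≤ (2*x) ^ χ := Real.rpow_le_rpow (by linarith) hm2x hχ0.le
        _ = (2:ℝ) ^ χ * x ^ χ := Real.mul_rpow (by norm_num) (by linarith)
        _ = (2:ℝ) ^ χ * (n:ℝ) ^ (1/2:ℝ) := by rw [hxχ]
    have hmχ0 : (0:ℝ) < (m:ℝ) ^ χ := Real.rpow_pos_of_pos (by linarith) χ
    have hεx : ε * x ≤ (n:ℝ) / (m:ℝ) ^ χ := by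
      have hxhalf : x ≤ (n:ℝ) ^ (1/2:ℝ) := by
        rw [hxdef]
        exact Real.rpow_le_rpow_of_exponent_le hn1 hbhalf
      have step1 : ε * x ≤ (2:ℝ) ^ (-χ) * (n:ℝ) ^ (1/2:ℝ) := by
        apply mul_le_mul (min_le_left _ _) hxhalf (by linarith) (Real.rpow_pos_of_pos two_pos _).le
      have step2 : (2:ℝ) ^ (-χ) * (n:ℝ) ^ (1/2:ℝ) ≤ (n:ℝ) / (m:ℝ) ^ χ := by
        rw [le_div_iff₀ hmχ0]
        calc (2:ℝ) ^ (-χ) * (n:ℝ) ^ (1/2:ℝ) * (m:ℝ) ^ χ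
            ≤ (2:ℝ) ^ (-χ) * (n:ℝ) ^ (1/2:ℝ) * ((2:ℝ) ^ χ * (n:ℝ) ^ (1/2:ℝ)) := by
              apply mul_le_mul_of_nonneg_left hmχ (by positivity)
          _ = ((2:ℝ) ^ (-χ) * (2:ℝ) ^ χ) * ((n:ℝ) ^ (1/2:ℝ) * (n:ℝ) ^ (1/2:ℝ)) := by ring
          _ = (n:ℝ) := by rw [h2a, hnhalf, one_mul]
      linarith
    have hterm1 : Real.exp (-((n:ℝ) / (m:ℝ) ^ χ)) ≤ Real.exp (-(ε * x)) := by
      apply Real.exp_le_exp.2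
      linarith
    -- tail bound
    have hsub : S ⊆ ⋃ k : ℕ, {ω | Y₀ ω = m + 1 + k} := by
      intro ω hω
      have : m < Y₀ ω := hω
      exact Set.mem_iUnion.2 ⟨Y₀ ω - (m+1), by simp; omega⟩
    have hterm2 : (ℙ S).toReal ≤ C * Real.exp (-(ε * x)) := by
      have hA : ℙ S ≤ ENNReal.ofReal (C * Real.exp (-δ * (m:ℝ))) := by
        have h1 : ℙ S ≤ ∑' k : ℕ, ℙ {ω | Y₀ ω = m + 1 + k} :=
          (measure_mono hsub).trans (measure_iUnion_le _)
        have h2 : ∀ k : ℕ, ℙ {ω | Y₀ ω = m + 1 + k}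
            = ENNReal.ofReal ((c * Real.exp (-δ * ((m:ℝ)+1))) * r ^ k) := by
          intro k
          rw [hlaw (m+1+k) (by omega)]
          congr 1
          push_cast
          rw [show -δ * ((m:ℝ) + 1 + (k:ℝ)) = -δ * ((m:ℝ)+1) + (k:ℝ) * (-δ) by ring,
            Real.exp_add, Real.exp_nat_mul]
          ring
        have hsum : Summable (fun k : ℕ => (c * Real.exp (-δ * ((m:ℝ)+1))) * r ^ k) :=
          (summable_geometric_of_lt_one hr0.le hr1).mul_left _
        have h3 : ∑' k : ℕ, ℙ {ω | Y₀ ω = m + 1 + k}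
            = ENNReal.ofReal (∑' k : ℕ, (c * Real.exp (-δ * ((m:ℝ)+1))) * r ^ k) := by
          rw [ENNReal.ofReal_tsum_of_nonneg (fun k => by positivity) hsum]
          exact tsum_congr h2
        have h4 : ∑' k : ℕ, (c * Real.exp (-δ * ((m:ℝ)+1))) * r ^ k
            = (c * Real.exp (-δ * ((m:ℝ)+1))) * (1 - r)⁻¹ := by
          rw [tsum_mul_left, tsum_geometric_of_lt_one hr0.le hr1]
        have h5 : (c * Real.exp (-δ * ((m:ℝ)+1))) * (1 - r)⁻¹ ≤ C * Real.exp (-δ * (m:ℝ)) := by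
          have he : Real.exp (-δ * ((m:ℝ)+1)) = Real.exp (-δ * (m:ℝ)) * r := by
            rw [hrdef, ← Real.exp_add]; ring_nf
          have h1r : (0:ℝ) < 1 - r := by linarith
          rw [he, hCdef]
          calc c * (Real.exp (-δ * (m:ℝ)) * r) * (1 - r)⁻¹
              ≤ c * (Real.exp (-δ * (m:ℝ)) * 1) * (1 - r)⁻¹ := by
                gcongr
                all_goals first | exact hr1.le | positivity
            _ = c / (1 - r) * Real.exp (-δ * (m:ℝ)) := by
                rw [mul_one, div_eq_mul_inv]; ring
        calc ℙ S ≤ ∑' k : ℕ, ℙ {ω | Y₀ ω = m + 1 + k} := h1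
          _ = ENNReal.ofReal (∑' k : ℕ, (c * Real.exp (-δ * ((m:ℝ)+1))) * r ^ k) := h3
          _ ≤ ENNReal.ofReal (C * Real.exp (-δ * (m:ℝ))) := by
              rw [h4]; exact ENNReal.ofReal_le_ofReal h5
      have hB : (ℙ S).toReal ≤ C * Real.exp (-δ * (m:ℝ)) :=
        ENNReal.toReal_le_of_le_ofReal (by positivity) hA
      have hC2 : C * Real.exp (-δ * (m:ℝ)) ≤ C * Real.exp (-(ε * x)) := by
        apply mul_le_mul_of_nonneg_left _ hC0.le
        apply Real.exp_le_exp.2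
        have : ε * x ≤ δ * (m:ℝ) :=
          mul_le_mul (min_le_right _ _) hxm (by linarith) hδ.le
        linarith
      linarith
    calc (∫ ω, (Real.exp (-1 / (Y₀ ω : ℝ) ^ χ)) ^ n ∂ℙ)
        ≤ Real.exp (-((n:ℝ) / (m:ℝ) ^ χ)) + (ℙ S).toReal := hint
      _ ≤ Real.exp (-(ε * x)) + C * Real.exp (-(ε * x)) := add_le_add hterm1 hterm2
      _ = (1 + C) * Real.exp (-(ε * ((n:ℝ) ^ b))) := by rw [hxdef]; ring
  -- Final limit
  have hbθ : 0 < b - θ := by linarith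
  have hK : (0:ℝ) < 1 + C := by linarith
  have h1 : Filter.Tendsto (fun n : ℕ => (1:ℝ) / (n:ℝ) ^ θ) atTop (nhds 0) := by
    have hnθ : Tendsto (fun n : ℕ => (n:ℝ) ^ θ) atTop atTop :=
      (tendsto_rpow_atTop hθ0).comp tendsto_natCast_atTop_atTop
    simpa [one_div, Pi.inv_def] using hnθ.inv_tendsto_atTop
  have h2 : Tendsto (fun n : ℕ => (1 + C) ^ ((1:ℝ) / (n:ℝ) ^ θ)) atTop (nhds 1) := by
    have hc2 : Tendsto (fun n : ℕ => ((1:ℝ)/(n:ℝ)^θ) * Real.log (1 + C)) atTop (nhds 0) := by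
      simpa using h1.mul_const (Real.log (1+C))
    have h3 := (Real.continuous_exp.tendsto 0).comp hc2
    simp only [Function.comp_def] at h3
    rw [Real.exp_zero] at h3
    refine h3.congr (fun n => ?_)
    show Real.exp ((1:ℝ)/(n:ℝ)^θ * Real.log (1+C)) = _
    rw [mul_comm, Real.exp_mul, Real.exp_log hK]
  have h3 : Tendsto (fun n : ℕ => Real.exp (-(ε * (n:ℝ) ^ (b - θ)))) atTop (nhds 0) := by
    apply Real.tendsto_exp_atBot.comp
    have ht : Tendsto (fun n : ℕ => (n:ℝ) ^ (b-θ)) atTop atTop :=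
      (tendsto_rpow_atTop hbθ).comp tendsto_natCast_atTop_atTop
    simpa [neg_mul] using ht.const_mul_atTop_of_neg (neg_lt_zero.2 hε0)
  have hlim : Tendsto (fun n : ℕ =>
      (1 + C) ^ ((1:ℝ)/(n:ℝ)^θ) * Real.exp (-(ε * (n:ℝ)^(b-θ)))) atTop (nhds 0) := by
    simpa using h2.mul h3
  apply tendsto_of_tendsto_of_tendsto_of_le_of_le' tendsto_const_nhds hlim
  · filter_upwards with n
    apply Real.rpow_nonneg
    apply integral_nonneg
    intro ω
    positivity
  · filter_upwards [eventually_ge_atTop 1] with n hn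
    have hn1 : (1:ℝ) ≤ (n:ℝ) := by exact_mod_cast hn
    have hn0 : (0:ℝ) < (n:ℝ) := by linarith
    have hint_nonneg : 0 ≤ ∫ ω, (Real.exp (-1 / (Y₀ ω : ℝ) ^ χ)) ^ n ∂ℙ := by
      apply integral_nonneg
      intro ω
      positivity
    have hp : (0:ℝ) ≤ (1:ℝ)/(n:ℝ)^θ := by positivity
    calc (∫ ω, (Real.exp (-1 / (Y₀ ω : ℝ) ^ χ)) ^ n ∂ℙ) ^ ((1:ℝ)/(n:ℝ)^θ)
        ≤ ((1+C) * Real.exp (-(ε*(n:ℝ)^b))) ^ ((1:ℝ)/(n:ℝ)^θ) :=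
          Real.rpow_le_rpow hint_nonneg (key n hn) hp
      _ = (1+C) ^ ((1:ℝ)/(n:ℝ)^θ) * (Real.exp (-(ε*(n:ℝ)^b))) ^ ((1:ℝ)/(n:ℝ)^θ) :=
          Real.mul_rpow (by linarith) (Real.exp_nonneg _)
      _ = (1+C) ^ ((1:ℝ)/(n:ℝ)^θ) * Real.exp (-(ε * (n:ℝ)^(b-θ))) := by
          congr 1
          rw [← Real.exp_mul]
          congr 1
          rw [Real.rpow_sub hn0]
          ring
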